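/- Let R be an irreducible simply-laced root system with positive roots R⁺ and half-sum of positive roots ρ. If β ∈ R is a root such that β + ρ is non-singular (i.e., ⟨β + ρ, α∨⟩ ≠ 0 for every α ∈ R⁺), then either β is the highest root α₀ or β is the negative of a simple root. -/
import Mathlib


/-!
STATEMENT 0. Let `R` be an irreducible simply-laced root system (in a real inner
product space) with positive roots `R⁺` (cut out by a linear functional `f` not
vanishing on any root) and half-sum of positive roots `ρ`.  If `β ∈ R` is such that
`β + ρ` is non-singular (i.e. `⟨β + ρ, α∨⟩ ≠ 0` for every positive root `α`), then
either `β` is the highest root or `β` is the negative of a simple root.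
-/

open scoped RealInnerProductSpace Classical

variable {V : Type*} [NormedAddCommGroup V] [InnerProductSpace ℝ V]

/-- The Cartan pairing `⟨β, α∨⟩ = 2(β,α)/(α,α)`. -/
noncomputable def pairCo (β a : V) : ℝ := 2 * ⟪β, a⟫ / ⟪a, a⟫

/-- A (reduced, crystallographic) root system, as a finite subset of a real inner
product space. -/
structure IsRootSystem (R : Finset V) : Prop where
  nonempty : R.Nonempty
  zero_not_mem : (0 : V) ∉ R
  crystallographic : ∀ a ∈ R, ∀ b ∈ R, ∃ n : ℤ, pairCo b a = (n : ℝ)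
  reflect_mem : ∀ a ∈ R, ∀ b ∈ R, b - pairCo b a • a ∈ R
  reduced : ∀ a ∈ R, ∀ t : ℝ, t • a ∈ R → t = 1 ∨ t = -1

/-- Irreducibility: `R` admits no splitting into two nonempty mutually orthogonal
parts. -/
def IsIrreducibleRS (R : Finset V) : Prop :=
  ∀ R₁ R₂ : Finset V, R = R₁ ∪ R₂ → Disjoint R₁ R₂ →
    (∀ a ∈ R₁, ∀ b ∈ R₂, ⟪a, b⟫ = 0) → R₁ = ∅ ∨ R₂ = ∅

/-- Simply-laced: all roots have the same length. -/
def IsSimplyLaced (R : Finset V) : Prop := ∀ a ∈ R, ∀ b ∈ R, ‖a‖ = ‖b‖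

/-- The positive roots determined by a linear functional `f` nonvanishing on `R`. -/
noncomputable def posRoots (R : Finset V) (f : V →ₗ[ℝ] ℝ) : Finset V :=
  R.filter fun a => 0 < f a

/-- Simple roots: positive roots which are not sums of two positive roots. -/
def IsSimpleRoot (R : Finset V) (f : V →ₗ[ℝ] ℝ) (a : V) : Prop :=
  a ∈ posRoots R f ∧ ¬ ∃ b ∈ posRoots R f, ∃ c ∈ posRoots R f, a = b + c

/-- The highest root: the (unique, for irreducible `R`) maximal root. -/
def IsHighestRoot (R : Finset V) (f : V →ₗ[ℝ] ℝ) (θ : V) : Prop :=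
  θ ∈ posRoots R f ∧ ∀ a ∈ posRoots R f, θ + a ∉ (R : Set V)

/-- `ρ`, the half-sum of the positive roots. -/
noncomputable def halfSumPos (R : Finset V) (f : V →ₗ[ℝ] ℝ) : V :=
  (2 : ℝ)⁻¹ • ∑ a ∈ posRoots R f, a

-- basic pairCo lemmas
lemma pairCo_add (x y a : V) : pairCo (x + y) a = pairCo x a + pairCo y a := by
  simp [pairCo, inner_add_left]; ring

lemma pairCo_neg (x a : V) : pairCo (-x) a = - pairCo x a := by
  simp [pairCo, inner_neg_left]; ring

lemma pairCo_smul (t : ℝ) (x a : V) : pairCo (t • x) a = t * pairCo x a := by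
  simp [pairCo, inner_smul_left]; ring

lemma pairCo_sub (x y a : V) : pairCo (x - y) a = pairCo x a - pairCo y a := by
  simp [pairCo, inner_sub_left]; ring

lemma pairCo_self {a : V} (ha : a ≠ 0) : pairCo a a = 2 := by
  have h : ⟪a, a⟫ ≠ 0 := inner_self_ne_zero.2 ha
  rw [pairCo, mul_div_assoc, div_self h, mul_one]

lemma pairCo_sum {ι : Type*} (s : Finset ι) (g : ι → V) (a : V) :
    pairCo (∑ i ∈ s, g i) a = ∑ i ∈ s, pairCo (g i) a := by
  simp [pairCo, sum_inner, Finset.sum_div, Finset.mul_sum]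

variable {R : Finset V}

lemma root_ne_zero (hR : IsRootSystem R) {a : V} (ha : a ∈ R) : a ≠ 0 := by
  rintro rfl; exact hR.zero_not_mem ha

lemma neg_mem (hR : IsRootSystem R) {a : V} (ha : a ∈ R) : -a ∈ R := by
  have := hR.reflect_mem a ha a ha
  rwa [pairCo_self (root_ne_zero hR ha), show a - (2:ℝ) • a = -a by module] at this

lemma inner_self_pos' (hR : IsRootSystem R) {a : V} (ha : a ∈ R) : 0 < ⟪a, a⟫ := by
  have h := root_ne_zero hR ha
  rw [real_inner_self_eq_norm_sq]
  exact pow_pos (norm_pos_iff.2 h) 2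

lemma pairCo_pos_of_inner (hR : IsRootSystem R) {a b : V} (ha : a ∈ R)
    (h : 0 < ⟪b, a⟫) : 0 < pairCo b a := by
  have := inner_self_pos' hR ha
  exact div_pos (by linarith) this

lemma pair_pos (hR : IsRootSystem R) (hsl : IsSimplyLaced R) {a b : V}
    (ha : a ∈ R) (hb : b ∈ R) (hne : b ≠ a) (h : 0 < pairCo b a) :
    pairCo b a = 1 ∧ b - a ∈ R := by
  obtain ⟨n, hn⟩ := hR.crystallographic a ha b hb
  have hc : 0 < ⟪a, a⟫ := inner_self_pos' hR ha
  have hba : ⟪b, a⟫ = n * ⟪a, a⟫ / 2 := by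
    have : 2 * ⟪b, a⟫ / ⟪a, a⟫ = n := hn
    field_simp at this
    linarith
  have hnorm : ‖a‖ = ‖b‖ := hsl a ha b hb
  have hbb : ⟪b, b⟫ = ⟪a, a⟫ := by
    rw [real_inner_self_eq_norm_sq, real_inner_self_eq_norm_sq, hnorm]
  have hsq : ‖b - a‖ ^ 2 = (2 - n) * ⟪a, a⟫ := by
    rw [norm_sub_sq_real, ← real_inner_self_eq_norm_sq, ← real_inner_self_eq_norm_sq,
      hbb, hba]
    ring
  have hn1 : (1 : ℝ) ≤ n := by
    have : (0 : ℝ) < n := by rwa [hn] at h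
    exact_mod_cast (by exact_mod_cast this : 0 < n)
  have hn2 : (n : ℝ) ≤ 2 := by
    nlinarith [sq_nonneg ‖b - a‖]
  have : (n : ℝ) = 1 ∨ (n : ℝ) = 2 := by
    have h1 : (1 : ℤ) ≤ n := by exact_mod_cast hn1
    have h2 : n ≤ 2 := by exact_mod_cast hn2
    interval_cases n <;> simp
  rcases this with h1 | h2
  · refine ⟨by rw [hn, h1], ?_⟩
    have := hR.reflect_mem a ha b hb
    rwa [hn, h1, one_smul] at this
  · exfalso
    have : ‖b - a‖ ^ 2 = 0 := by rw [hsq, h2]; ring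
    have : b - a = 0 := by
      have := pow_eq_zero_iff (n := 2) (by norm_num) |>.1 this
      exact norm_eq_zero.1 this
    exact hne (sub_eq_zero.1 this)

lemma pair_neg_mem (hR : IsRootSystem R) (hsl : IsSimplyLaced R) {a b : V}
    (ha : a ∈ R) (hb : b ∈ R) (hne : b ≠ -a) (h : pairCo b a < 0) :
    a + b ∈ R := by
  have hnb : -b ∈ R := neg_mem hR hb
  have hpos : 0 < pairCo (-b) a := by rw [pairCo_neg]; linarith
  have hne' : -b ≠ a := fun hh => hne (by rw [← hh]; module)
  obtain ⟨-, hmem⟩ := pair_pos hR hsl ha hnb hne' hpos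
  have := neg_mem hR hmem
  rwa [show -(-b - a) = a + b by module] at this

lemma pair_of_add_mem (hR : IsRootSystem R) (hsl : IsSimplyLaced R) {a b : V}
    (ha : a ∈ R) (hb : b ∈ R) (hab : a + b ∈ R) : pairCo b a = -1 := by
  have h1 : ‖a‖ = ‖b‖ := hsl a ha b hb
  have h2 : ‖a‖ = ‖a + b‖ := hsl a ha _ hab
  have hc : 0 < ⟪a, a⟫ := inner_self_pos' hR ha
  have hexp : ‖a + b‖ ^ 2 = ‖a‖ ^ 2 + 2 * ⟪a, b⟫ + ‖b‖ ^ 2 := norm_add_sq_real a b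
  have e1 : ‖b‖ ^ 2 = ‖a‖ ^ 2 := by rw [h1]
  have e2 : ‖a + b‖ ^ 2 = ‖a‖ ^ 2 := by rw [← h2]
  have hba : 2 * ⟪b, a⟫ = -⟪a, a⟫ := by
    rw [real_inner_comm]
    have := real_inner_self_eq_norm_sq a
    linarith
  rw [pairCo, hba, neg_div, div_self (ne_of_gt hc)]

lemma pos_or_neg (hR : IsRootSystem R) {f : V →ₗ[ℝ] ℝ} (hf : ∀ a ∈ R, f a ≠ 0)
    {a : V} (ha : a ∈ R) : a ∈ posRoots R f ∨ -a ∈ posRoots R f := by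
  rcases lt_or_gt_of_ne (hf a ha) with h | h
  · right
    exact Finset.mem_filter.2 ⟨neg_mem hR ha, by rw [map_neg]; linarith⟩
  · left
    exact Finset.mem_filter.2 ⟨ha, h⟩

lemma decomp_aux (hR : IsRootSystem R) (f : V →ₗ[ℝ] ℝ) (n : ℕ) :
    ∀ β ∈ posRoots R f,
      ((posRoots R f).filter fun γ => f γ < f β).card ≤ n →
      ∃ s : Multiset V, s ≠ 0 ∧ (∀ x ∈ s, IsSimpleRoot R f x) ∧ s.sum = β := by
  induction n with
  | zero =>
    intro β hβ hcard
    by_cases h : ∃ b ∈ posRoots R f, ∃ c ∈ posRoots R f, β = b + c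
    · exfalso
      obtain ⟨b, hb, c, hc, rfl⟩ := h
      have hfb : 0 < f b := (Finset.mem_filter.1 hb).2
      have hfc : 0 < f c := (Finset.mem_filter.1 hc).2
      have hmem : b ∈ (posRoots R f).filter fun γ => f γ < f (b + c) := by
        refine Finset.mem_filter.2 ⟨hb, ?_⟩
        rw [map_add]; linarith
      have := Finset.card_pos.2 ⟨b, hmem⟩
      omega
    · exact ⟨{β}, by simp, by simpa using ⟨hβ, h⟩, by simp⟩
  | succ n ih =>
    intro β hβ hcard
    by_cases h : ∃ b ∈ posRoots R f, ∃ c ∈ posRoots R f, β = b + c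
    · obtain ⟨b, hb, c, hc, rfl⟩ := h
      have hfb : 0 < f b := (Finset.mem_filter.1 hb).2
      have hfc : 0 < f c := (Finset.mem_filter.1 hc).2
      have key : ∀ x, x ∈ posRoots R f → f x < f (b + c) →
          ((posRoots R f).filter fun γ => f γ < f x).card ≤ n := by
        intro x hx hxlt
        have hss : ((posRoots R f).filter fun γ => f γ < f x) ⊂
            ((posRoots R f).filter fun γ => f γ < f (b + c)) := by
          refine ⟨fun y hy => ?_, fun hcon => ?_⟩
          · have hy' := Finset.mem_filter.1 hy
            exact Finset.mem_filter.2 ⟨hy'.1, lt_trans hy'.2 hxlt⟩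
          · have hx2 : x ∈ (posRoots R f).filter fun γ => f γ < f x :=
              hcon (Finset.mem_filter.2 ⟨hx, hxlt⟩)
            exact lt_irrefl _ (Finset.mem_filter.1 hx2).2
        have := Finset.card_lt_card hss
        omega
      obtain ⟨s1, hs10, hs1s, hs1sum⟩ :=
        ih b hb (key b hb (by rw [map_add]; linarith))
      obtain ⟨s2, hs20, hs2s, hs2sum⟩ :=
        ih c hc (key c hc (by rw [map_add]; linarith))
      refine ⟨s1 + s2, ?_, ?_, ?_⟩
      · intro hzero
        obtain ⟨a, haa⟩ := Multiset.exists_mem_of_ne_zero hs10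
        have hmem : a ∈ s1 + s2 := Multiset.mem_add.2 (Or.inl haa)
        rw [hzero] at hmem
        simp at hmem
      · intro x hx
        rcases Multiset.mem_add.1 hx with hx | hx
        · exact hs1s x hx
        · exact hs2s x hx
      · rw [Multiset.sum_add, hs1sum, hs2sum]
    · exact ⟨{β}, by simp, by simpa using ⟨hβ, h⟩, by simp⟩

lemma decomp (hR : IsRootSystem R) (f : V →ₗ[ℝ] ℝ) {β : V} (hβ : β ∈ posRoots R f) :
    ∃ s : Multiset V, s ≠ 0 ∧ (∀ x ∈ s, IsSimpleRoot R f x) ∧ s.sum = β :=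
  decomp_aux hR f _ β hβ le_rfl

lemma exists_simple_inner_pos (hR : IsRootSystem R) (f : V →ₗ[ℝ] ℝ) {β : V}
    (hβ : β ∈ posRoots R f) : ∃ α, IsSimpleRoot R f α ∧ 0 < ⟪β, α⟫ := by
  obtain ⟨s, hs0, hss, hsum⟩ := decomp hR f hβ
  by_contra hcon
  push_neg at hcon
  have hβR : β ∈ R := (Finset.mem_filter.1 hβ).1
  have hpos : 0 < ⟪β, β⟫ := inner_self_pos' hR hβR
  have key : ∀ t : Multiset V, (∀ x ∈ t, ⟪β, x⟫ ≤ 0) → ⟪β, t.sum⟫ ≤ 0 := by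
    intro t
    induction t using Multiset.induction_on with
    | empty => intro _; simp
    | cons a t iht =>
      intro h
      rw [Multiset.sum_cons, inner_add_right]
      have h1 := h a (Multiset.mem_cons_self a t)
      have h2 := iht fun x hx => h x (Multiset.mem_cons_of_mem hx)
      linarith
  have := key s fun x hx => hcon x (hss x hx)
  rw [hsum] at this
  linarith

lemma sub_simple_pos (hR : IsRootSystem R) (hsl : IsSimplyLaced R) {f : V →ₗ[ℝ] ℝ}
    (hf : ∀ a ∈ R, f a ≠ 0) {α γ : V}
    (hα : IsSimpleRoot R f α) (hγ : γ ∈ posRoots R f) (hne : γ ≠ α)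
    (h : 0 < pairCo γ α) : pairCo γ α = 1 ∧ γ - α ∈ posRoots R f := by
  have hαR : α ∈ R := (Finset.mem_filter.1 hα.1).1
  have hγR : γ ∈ R := (Finset.mem_filter.1 hγ).1
  have hγf : 0 < f γ := (Finset.mem_filter.1 hγ).2
  obtain ⟨hpair, hmem⟩ := pair_pos hR hsl hαR hγR hne h
  refine ⟨hpair, Finset.mem_filter.2 ⟨hmem, ?_⟩⟩
  rcases lt_or_gt_of_ne (hf _ hmem) with hlt | hgt
  · exfalso
    have hR' : α - γ ∈ R := by
      have := neg_mem hR hmem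
      rwa [neg_sub] at this
    have hmem' : α - γ ∈ posRoots R f := by
      refine Finset.mem_filter.2 ⟨hR', ?_⟩
      have : f (γ - α) = f γ - f α := by rw [map_sub]
      have h2 : f (α - γ) = f α - f γ := by rw [map_sub]
      linarith [hlt]
    exact hα.2 ⟨γ, hγ, α - γ, hmem', by abel⟩
  · exact hgt

lemma rho_pair (hR : IsRootSystem R) (hsl : IsSimplyLaced R) {f : V →ₗ[ℝ] ℝ}
    (hf : ∀ a ∈ R, f a ≠ 0) {α : V} (hα : IsSimpleRoot R f α) :
    pairCo (halfSumPos R f) α = 1 := by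
  have hαP : α ∈ posRoots R f := hα.1
  have hαR : α ∈ R := (Finset.mem_filter.1 hαP).1
  have hα0 : α ≠ 0 := root_ne_zero hR hαR
  have hfα : 0 < f α := (Finset.mem_filter.1 hαP).2
  set Q := (posRoots R f).erase α with hQ
  set σ : V → V := fun γ => γ - pairCo γ α • α with hσ
  have hσpair : ∀ γ, pairCo (σ γ) α = - pairCo γ α := by
    intro γ
    simp only [hσ]
    rw [pairCo_sub, pairCo_smul, pairCo_self hα0]
    ring
  have hinv : ∀ γ, σ (σ γ) = γ := by
    intro γ
    have h1 := hσpair γ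
    calc σ (σ γ) = σ γ - pairCo (σ γ) α • α := rfl
    _ = (γ - pairCo γ α • α) - (- pairCo γ α) • α := by rw [h1]
    _ = γ := by module
  have hmaps : ∀ γ ∈ Q, σ γ ∈ Q := by
    intro γ hγQ
    have hγP : γ ∈ posRoots R f := Finset.mem_of_mem_erase hγQ
    have hγα : γ ≠ α := Finset.ne_of_mem_erase hγQ
    have hγR : γ ∈ R := (Finset.mem_filter.1 hγP).1
    have hγf : 0 < f γ := (Finset.mem_filter.1 hγP).2
    have hmemR : σ γ ∈ R := hR.reflect_mem α hαR γ hγR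
    have hP : σ γ ∈ posRoots R f := by
      rcases le_or_gt (pairCo γ α) 0 with hc | hc
      · refine Finset.mem_filter.2 ⟨hmemR, ?_⟩
        have hfσ : f (σ γ) = f γ - pairCo γ α * f α := by
          simp only [hσ, map_sub, map_smul, smul_eq_mul]
        rw [hfσ]
        nlinarith
      · obtain ⟨hpair, hmem⟩ := sub_simple_pos hR hsl hf hα hγP hγα hc
        have heq : σ γ = γ - α := by rw [hσ]; simp only [hpair, one_smul]
        rwa [heq]
    have hne : σ γ ≠ α := by
      intro hcon
      have hγeq : γ = σ α := by rw [← hcon, hinv]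
      have hσα : σ α = -α := by
        simp only [hσ, pairCo_self hα0]
        module
      rw [hσα] at hγeq
      rw [hγeq, map_neg] at hγf
      linarith
    exact Finset.mem_erase.2 ⟨hne, hP⟩
  have hsum0 : ∑ γ ∈ Q, pairCo γ α = 0 := by
    have h1 : ∑ γ ∈ Q, pairCo (σ γ) α = ∑ γ ∈ Q, pairCo γ α :=
      Finset.sum_nbij' σ σ hmaps hmaps (fun a _ => hinv a) (fun a _ => hinv a)
        (fun a _ => rfl)
    have h2 : ∑ γ ∈ Q, pairCo (σ γ) α = - ∑ γ ∈ Q, pairCo γ α := by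
      rw [← Finset.sum_neg_distrib]
      exact Finset.sum_congr rfl fun γ _ => hσpair γ
    linarith [h1, h2]
  have hsplit : ∑ γ ∈ posRoots R f, pairCo γ α = 2 := by
    rw [← Finset.insert_erase hαP, Finset.sum_insert (Finset.notMem_erase α _),
      pairCo_self hα0]
    rw [← hQ, hsum0]
    ring
  rw [halfSumPos, pairCo_smul, pairCo_sum, hsplit]
  norm_num

theorem simply_laced_nonsingular_root_plus_rho
    (R : Finset V) (hR : IsRootSystem R) (hirr : IsIrreducibleRS R)
    (hsl : IsSimplyLaced R)
    (f : V →ₗ[ℝ] ℝ) (hf : ∀ a ∈ R, f a ≠ 0)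
    (β : V) (hβ : β ∈ R)
    (hns : ∀ a ∈ posRoots R f, pairCo (β + halfSumPos R f) a ≠ 0) :
    IsHighestRoot R f β ∨ ∃ a, IsSimpleRoot R f a ∧ β = -a := by
  classical
  have hns' : ∀ α, IsSimpleRoot R f α → pairCo β α ≠ -1 := by
    intro α hα hcon
    have h := hns α hα.1
    rw [pairCo_add, hcon, rho_pair hR hsl hf hα] at h
    norm_num at h
  have hF : ∀ α, IsSimpleRoot R f α → α + β ∉ R := by
    intro α hα hmem
    have hαR : α ∈ R := (Finset.mem_filter.1 hα.1).1
    exact hns' α hα (pair_of_add_mem hR hsl hαR hβ hmem)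
  rcases pos_or_neg hR hf hβ with hβP | hβN
  · left
    refine ⟨hβP, ?_⟩
    by_contra hcon
    push_neg at hcon
    obtain ⟨γ₀, hγ₀P, hγ₀R⟩ := hcon
    set S := (posRoots R f).filter (fun γ => β + γ ∈ R) with hS
    have hS0 : γ₀ ∈ S := Finset.mem_filter.2 ⟨hγ₀P, by exact_mod_cast hγ₀R⟩
    obtain ⟨γ, hγS, hmin⟩ := S.exists_min_image f ⟨γ₀, hS0⟩
    have hγP : γ ∈ posRoots R f := (Finset.mem_filter.1 hγS).1
    have hδR : β + γ ∈ R := (Finset.mem_filter.1 hγS).2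
    have hγR : γ ∈ R := (Finset.mem_filter.1 hγP).1
    have hγf : 0 < f γ := (Finset.mem_filter.1 hγP).2
    have hβf : 0 < f β := (Finset.mem_filter.1 hβP).2
    have hγnotsimple : ¬ IsSimpleRoot R f γ := by
      intro hγs
      exact hF γ hγs (by rwa [add_comm] at hδR)
    obtain ⟨α, hα, hinner⟩ := exists_simple_inner_pos hR f hγP
    have hαR : α ∈ R := (Finset.mem_filter.1 hα.1).1
    have hαf : 0 < f α := (Finset.mem_filter.1 hα.1).2
    have hpos : 0 < pairCo γ α := pairCo_pos_of_inner hR hαR hinner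
    have hγα : γ ≠ α := by rintro rfl; exact hγnotsimple hα
    obtain ⟨hpair1, hγαP⟩ := sub_simple_pos hR hsl hf hα hγP hγα hpos
    have hβα : 0 ≤ pairCo β α := by
      by_contra hneg
      push_neg at hneg
      have hβnα : β ≠ -α := by
        intro hcon; rw [hcon, map_neg] at hβf; linarith
      exact hF α hα (pair_neg_mem hR hsl hαR hβ hβnα hneg)
    have hδα : β + γ ≠ α := by
      intro hcon
      exact hα.2 ⟨β, hβP, γ, hγP, hcon.symm⟩
    have hδpos : 0 < pairCo (β + γ) α := by
      rw [pairCo_add]; linarith [hpair1]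
    obtain ⟨-, hδsub⟩ := pair_pos hR hsl hαR hδR hδα hδpos
    have hmemS : γ - α ∈ S := by
      refine Finset.mem_filter.2 ⟨hγαP, ?_⟩
      have heq : β + (γ - α) = β + γ - α := by abel
      rw [heq]; exact hδsub
    have hle := hmin _ hmemS
    rw [map_sub] at hle
    linarith
  · right
    obtain ⟨α, hα, hinner⟩ := exists_simple_inner_pos hR f hβN
    have hαR : α ∈ R := (Finset.mem_filter.1 hα.1).1
    by_cases hcase : -β = α
    · exact ⟨α, hα, by rw [← hcase, neg_neg]⟩
    · exfalso
      have hnβR : -β ∈ R := (Finset.mem_filter.1 hβN).1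
      have hpos : 0 < pairCo (-β) α := pairCo_pos_of_inner hR hαR hinner
      obtain ⟨hpair, -⟩ := pair_pos hR hsl hαR hnβR hcase hpos
      have hm1 : pairCo β α = -1 := by
        rw [pairCo_neg] at hpair; linarith
      exact hns' α hα hm1
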